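/- Let X be an abelian quandle (i.e., (x*y)*z = (x*z)*y for all x,y,z) generated as a quandle by a finite set of r elements. Then for each n ≥ 2, the n-quandle quotient X_n of X (obtained by imposing x *ⁿ y = x for all x,y) is finite, with |X_n| ≤ r·n^{r-1}. -/

import Mathlib

/-- A quandle is *abelian* if `(x * y) * z = (x * z) * y` for all `x, y, z` (equivalently its
inner automorphism group is abelian).  In Mathlib's left-action convention this reads
`z ◃ (y ◃ x) = y ◃ (z ◃ x)`. -/
def IsAbelianQuandle (X : Type*) [Quandle X] : Prop :=
  ∀ x y z : X, Shelf.act z (Shelf.act y x) = Shelf.act y (Shelf.act z x)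

/-- The subquandle generated by a subset `T` of a quandle: the closure of `T` under the
quandle operation and its dual. -/
inductive QuandleClosure {X : Type*} [Rack X] (T : Set X) : X → Prop
  | base {a : X} : a ∈ T → QuandleClosure T a
  | act {a b : X} : QuandleClosure T a → QuandleClosure T b →
      QuandleClosure T (Shelf.act a b)
  | invAct {a b : X} : QuandleClosure T a → QuandleClosure T b →
      QuandleClosure T (Rack.invAct a b)

/-- The congruence on a quandle `X` generated by the relations `x *ⁿ y = x` (i.e.
`(Shelf.act y)^[n] x = x`): the smallest equivalence relation containing these pairs and
compatible with the quandle operation and its dual.  The quotient is the `n`-quandle `X_n`. -/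
inductive NQuandleRel (X : Type*) [Quandle X] (n : ℕ) : X → X → Prop
  | base (a b : X) : NQuandleRel X n ((Shelf.act b)^[n] a) a
  | refl (a : X) : NQuandleRel X n a a
  | symm {a b : X} : NQuandleRel X n a b → NQuandleRel X n b a
  | trans {a b c : X} : NQuandleRel X n a b → NQuandleRel X n b c → NQuandleRel X n a c
  | act {a b c d : X} : NQuandleRel X n a b → NQuandleRel X n c d →
      NQuandleRel X n (Shelf.act a c) (Shelf.act b d)
  | invAct {a b c d : X} : NQuandleRel X n a b → NQuandleRel X n c d →
      NQuandleRel X n (Rack.invAct a c) (Rack.invAct b d)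

/-- The setoid underlying the `n`-quandle quotient `X_n` of a quandle `X`. -/
def nQuandleSetoid (X : Type*) [Quandle X] (n : ℕ) : Setoid X :=
  ⟨NQuandleRel X n, fun a => NQuandleRel.refl a, fun h => h.symm, fun h h' => h.trans h'⟩

namespace AbelianNQuandleAux

variable {X : Type*} [Quandle X]

/-- The `n`-quandle quotient. -/
abbrev Q (X : Type*) [Quandle X] (n : ℕ) := Quotient (nQuandleSetoid X n)

/-- Quotient map. -/
def qk (n : ℕ) (a : X) : Q X n := Quotient.mk (nQuandleSetoid X n) a

/-- Action descends to the quotient. -/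
def actQ (n : ℕ) (a : X) : Q X n → Q X n :=
  Quotient.map' (Shelf.act a) (fun _ _ h => NQuandleRel.act (NQuandleRel.refl a) h)

/-- Inverse action descends to the quotient. -/
def invActQ (n : ℕ) (a : X) : Q X n → Q X n :=
  Quotient.map' (Rack.invAct a) (fun _ _ h => NQuandleRel.invAct (NQuandleRel.refl a) h)

lemma actQ_mk (n : ℕ) (a c : X) : actQ n a (qk n c) = qk n (Shelf.act a c) := rfl

lemma invActQ_mk (n : ℕ) (a c : X) : invActQ n a (qk n c) = qk n (Rack.invAct a c) := rfl

lemma actQ_iterate (n : ℕ) (a : X) (k : ℕ) (c : X) :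
    (actQ n a)^[k] (qk n c) = qk n ((Shelf.act a)^[k] c) := by
  induction k generalizing c with
  | zero => rfl
  | succ k ih =>
      rw [Function.iterate_succ_apply, Function.iterate_succ_apply, actQ_mk, ih]

lemma actQ_iterate_n (n : ℕ) (a : X) (z : Q X n) : (actQ n a)^[n] z = z := by
  induction z using Quotient.inductionOn' with
  | h c => exact (actQ_iterate n a n c).trans (Quotient.sound' (NQuandleRel.base c a))

lemma invActQ_actQ (n : ℕ) (a : X) (z : Q X n) : invActQ n a (actQ n a z) = z := by
  induction z using Quotient.inductionOn' with
  | h c =>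
      show qk n (Rack.invAct a (Shelf.act a c)) = qk n c
      rw [Rack.left_inv]

lemma actQ_invActQ (n : ℕ) (a : X) (z : Q X n) : actQ n a (invActQ n a z) = z := by
  induction z using Quotient.inductionOn' with
  | h c =>
      show qk n (Shelf.act a (Rack.invAct a c)) = qk n c
      rw [Rack.right_inv]

lemma actQ_injective (n : ℕ) (a : X) : Function.Injective (actQ n a) :=
  Function.LeftInverse.injective (invActQ_actQ n a)

lemma invActQ_eq_iterate (n : ℕ) (hn : 1 ≤ n) (a : X) (z : Q X n) :
    invActQ n a z = (actQ n a)^[n - 1] z := by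
  apply actQ_injective n a
  rw [actQ_invActQ, ← Function.iterate_succ_apply' (actQ n a) (n - 1) z,
    Nat.succ_eq_add_one, Nat.sub_add_cancel hn, actQ_iterate_n]

lemma actQ_comm (habel : IsAbelianQuandle X) (n : ℕ) (a b : X) (z : Q X n) :
    actQ n a (actQ n b z) = actQ n b (actQ n a z) := by
  induction z using Quotient.inductionOn' with
  | h c =>
      show qk n (Shelf.act a (Shelf.act b c)) = qk n (Shelf.act b (Shelf.act a c))
      rw [habel]

/-- In an abelian quandle, `S_{a ◃ b} = S_b`. -/
lemma act_act_eq (habel : IsAbelianQuandle X) (a b c : X) :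
    Shelf.act (Shelf.act a b) c = Shelf.act b c := by
  have h : c = Shelf.act a (Rack.invAct a c) := (Rack.right_inv a c).symm
  rw [h, ← Shelf.self_distrib, habel]

/-- In an abelian quandle, `S_{a ◃⁻¹ b} = S_b`. -/
lemma invAct_act_eq (habel : IsAbelianQuandle X) (a b c : X) :
    Shelf.act (Rack.invAct a b) c = Shelf.act b c := by
  conv_rhs => rw [show b = Shelf.act a (Rack.invAct a b) from (Rack.right_inv a b).symm]
  rw [act_act_eq habel]

/-- Every element of the subquandle generated by the `x i` translates like some `x i`. -/
lemma trans_eq_gen (habel : IsAbelianQuandle X) {r : ℕ} (x : Fin r → X) {a : X}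
    (ha : QuandleClosure (Set.range x) a) : ∃ i : Fin r, ∀ c : X,
      Shelf.act a c = Shelf.act (x i) c := by
  induction ha with
  | base h => obtain ⟨i, hi⟩ := h; exact ⟨i, fun c => by rw [hi]⟩
  | act _ _ _ ihb =>
      obtain ⟨i, hi⟩ := ihb
      exact ⟨i, fun c => by rw [act_act_eq habel, hi]⟩
  | invAct _ _ _ ihb =>
      obtain ⟨i, hi⟩ := ihb
      exact ⟨i, fun c => by rw [invAct_act_eq habel, hi]⟩

variable {r : ℕ} (x : Fin r → X)

/-- Apply a word of generator translations. -/
def wl (n : ℕ) (l : List (Fin r)) (z : Q X n) : Q X n :=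
  l.foldr (fun j w => actQ n (x j) w) z

lemma wl_nil (n : ℕ) (z : Q X n) : wl x n [] z = z := rfl

lemma wl_cons (n : ℕ) (j : Fin r) (l : List (Fin r)) (z : Q X n) :
    wl x n (j :: l) z = actQ n (x j) (wl x n l z) := rfl

lemma wl_append (n : ℕ) (l l' : List (Fin r)) (z : Q X n) :
    wl x n (l ++ l') z = wl x n l (wl x n l' z) :=
  List.foldr_append

lemma wl_replicate (n k : ℕ) (j : Fin r) (z : Q X n) :
    wl x n (List.replicate k j) z = (actQ n (x j))^[k] z := by
  induction k with
  | zero => rfl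
  | succ k ih =>
      rw [List.replicate_succ, wl_cons, ih, Function.iterate_succ_apply']

lemma wl_perm (habel : IsAbelianQuandle X) (n : ℕ) {l l' : List (Fin r)}
    (h : l.Perm l') (z : Q X n) : wl x n l z = wl x n l' z := by
  induction h with
  | nil => rfl
  | cons a _ ih => rw [wl_cons, wl_cons, ih]
  | swap a b l => rw [wl_cons, wl_cons, wl_cons, wl_cons, actQ_comm habel]
  | trans _ _ ih₁ ih₂ => rw [ih₁, ih₂]

lemma actQ_wl (habel : IsAbelianQuandle X) (n : ℕ) (j : Fin r) (l : List (Fin r)) (z : Q X n) :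
    actQ n (x j) (wl x n l z) = wl x n l (actQ n (x j) z) := by
  induction l with
  | nil => rfl
  | cons a l ih => rw [wl_cons, actQ_comm habel, ih, wl_cons]

/-- Normal form: every element of the quotient is a word in the generators applied to a
generator. -/
lemma exists_word (habel : IsAbelianQuandle X) (n : ℕ) (hn : 1 ≤ n)
    (hgen : ∀ a : X, QuandleClosure (Set.range x) a) (a : X) :
    ∃ (i : Fin r) (l : List (Fin r)), qk n a = wl x n l (qk n (x i)) := by
  induction hgen a with
  | @base a h => obtain ⟨i, hi⟩ := h; exact ⟨i, [], by rw [hi]; rfl⟩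
  | @act a b ha _ _ ihb =>
      obtain ⟨j, l, hl⟩ := ihb
      obtain ⟨i, hi⟩ := trans_eq_gen habel x ha
      refine ⟨j, i :: l, ?_⟩
      rw [wl_cons, ← hl]
      show qk n (Shelf.act a b) = actQ n (x i) (qk n b)
      rw [actQ_mk, hi]
  | @invAct a b ha _ _ ihb =>
      obtain ⟨j, l, hl⟩ := ihb
      obtain ⟨i, hi⟩ := trans_eq_gen habel x ha
      refine ⟨j, List.replicate (n - 1) i ++ l, ?_⟩
      rw [wl_append, wl_replicate, ← hl]
      have hact : actQ n a = actQ n (x i) := by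
        funext z
        induction z using Quotient.inductionOn' with
        | h c => show qk n (Shelf.act a c) = qk n (Shelf.act (x i) c); rw [hi]
      show qk n (Rack.invAct a b) = _
      rw [← invActQ_mk, invActQ_eq_iterate n hn, hact]

lemma iterate_mod {n : ℕ} (hn : 1 ≤ n) {f : Q X n → Q X n} (hf : ∀ z, f^[n] z = z)
    (k : ℕ) (z : Q X n) : f^[k] z = f^[k % n] z := by
  conv_lhs => rw [← Nat.mod_add_div k n]
  rw [Function.iterate_add_apply]
  congr 1
  generalize k / n = m
  induction m with
  | zero => rfl
  | succ m ih => rw [Nat.mul_succ, Function.iterate_add_apply, hf, ih]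

/-- Expand an exponent vector into a word. -/
def expand (e : Fin r → ℕ) : List (Fin r) :=
  (List.finRange r).flatMap (fun j => List.replicate (e j) j)

lemma count_flatMap_aux (e : Fin r → ℕ) (j₀ : Fin r) (L : List (Fin r)) (hL : L.Nodup) :
    (L.flatMap (fun j => List.replicate (e j) j)).count j₀ = if j₀ ∈ L then e j₀ else 0 := by
  induction L with
  | nil => simp
  | cons a L ih =>
      rw [List.flatMap_cons, List.count_append, ih (List.Nodup.of_cons hL),
        List.count_replicate]
      rcases eq_or_ne j₀ a with rfl | hne
      · have : j₀ ∉ L := (List.nodup_cons.mp hL).1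
        simp [this]
      · simp [hne, hne.symm]

lemma count_expand (e : Fin r → ℕ) (j₀ : Fin r) : (expand (r := r) e).count j₀ = e j₀ := by
  have := count_flatMap_aux e j₀ (List.finRange r) (List.nodup_finRange r)
  simpa [expand, List.mem_finRange] using this

lemma wl_flatMap (n : ℕ) (e : Fin r → ℕ) (L : List (Fin r)) (z : Q X n) :
    wl x n (L.flatMap (fun j => List.replicate (e j) j)) z =
      L.foldr (fun j w => (actQ n (x j))^[e j] w) z := by
  induction L with
  | nil => rfl
  | cons a L ih =>
      rw [List.flatMap_cons, wl_append, wl_replicate, ih]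
      rfl

/-- Reduce a word to one with all exponents `< n` and no occurrence of the base index. -/
lemma reduce_word (habel : IsAbelianQuandle X) (n : ℕ) (hn : 1 ≤ n) (l : List (Fin r))
    (i : Fin r) : ∃ l' : List (Fin r), (∀ j, l'.count j < n) ∧ l'.count i = 0 ∧
      wl x n l (qk n (x i)) = wl x n l' (qk n (x i)) := by
  classical
  set z₀ := qk n (x i) with hz₀
  have hfix : actQ n (x i) z₀ = z₀ := by
    show qk n (Shelf.act (x i) (x i)) = qk n (x i)
    rw [Quandle.fix]
  have hfixiter : ∀ k, (actQ n (x i))^[k] z₀ = z₀ := by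
    intro k
    induction k with
    | zero => rfl
    | succ k ih => rw [Function.iterate_succ_apply', ih, hfix]
  -- exponent vectors
  set e : Fin r → ℕ := fun j => l.count j with he
  set e₂ : Fin r → ℕ := fun j => if j = i then 0 else l.count j % n with he₂
  refine ⟨expand (r := r) e₂, ?_, ?_, ?_⟩
  · intro j
    rw [count_expand]
    rcases eq_or_ne j i with rfl | hne
    · simpa [he₂] using Nat.lt_of_lt_of_le Nat.zero_lt_one hn
    · simp only [he₂, if_neg hne]
      exact Nat.mod_lt _ hn
  · rw [count_expand]; simp [he₂]
  · -- first, `l` is a permutation of `expand (r := r) e`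
    have h₁ : wl x n l z₀ = wl x n (expand (r := r) e) z₀ := by
      refine wl_perm x habel n ?_ z₀
      rw [List.perm_iff_count]
      intro j
      rw [count_expand]
    rw [h₁]
    simp only [expand]
    rw [wl_flatMap, wl_flatMap]
    -- now reduce termwise over `finRange r`
    have key : ∀ L : List (Fin r),
        L.foldr (fun j w => (actQ n (x j))^[e j] w) z₀ =
          L.foldr (fun j w => (actQ n (x j))^[e₂ j] w) z₀ := by
      intro L
      induction L with
      | nil => rfl
      | cons a L ih =>
          show (actQ n (x a))^[e a] (L.foldr _ z₀) = (actQ n (x a))^[e₂ a] (L.foldr _ z₀)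
          rw [ih]
          rcases eq_or_ne a i with rfl | hne
          · have h0 : e₂ a = 0 := by simp [he₂]
            rw [h0]
            have hab : ∀ (b : Fin r) (k m : ℕ) (w : Q X n),
                (actQ n (x a))^[k] ((actQ n (x b))^[m] w) =
                  (actQ n (x b))^[m] ((actQ n (x a))^[k] w) := by
              intro b k m w
              have h1 : ∀ (m : ℕ) (w : Q X n), actQ n (x a) ((actQ n (x b))^[m] w) =
                  (actQ n (x b))^[m] (actQ n (x a) w) := by
                intro m
                induction m with
                | zero => intro w; rfl
                | succ m ihm =>
                    intro w
                    rw [Function.iterate_succ_apply', actQ_comm habel, ihm,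
                      Function.iterate_succ_apply']
              induction k with
              | zero => rfl
              | succ k ihk =>
                  rw [Function.iterate_succ_apply', Function.iterate_succ_apply', ihk, h1]
            have hcomm : ∀ (ll : List (Fin r)) (k : ℕ),
                (actQ n (x a))^[k] (ll.foldr (fun j w => (actQ n (x j))^[e₂ j] w) z₀) =
                  ll.foldr (fun j w => (actQ n (x j))^[e₂ j] w) ((actQ n (x a))^[k] z₀) := by
              intro ll k
              induction ll with
              | nil => rfl
              | cons b ll ihl =>
                  show (actQ n (x a))^[k] ((actQ n (x b))^[e₂ b] _) = (actQ n (x b))^[e₂ b] _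
                  rw [hab, ihl]
            rw [hcomm, hfixiter]
            rfl
          · have h1 : e₂ a = e a % n := by simp [he₂, hne, he]
            rw [h1]
            exact iterate_mod hn (actQ_iterate_n n (x a)) (e a) _
    exact key _
  
/-- Exponent vectors vanishing at `i` correspond to functions on the complement. -/
def subEquiv (n : ℕ) (hn : 0 < n) (i : Fin r) :
    {e : Fin r → Fin n // (e i : ℕ) = 0} ≃ ({j : Fin r // j ≠ i} → Fin n) where
  toFun e j := e.1 j.1
  invFun g := ⟨fun j => if h : j = i then ⟨0, hn⟩ else g ⟨j, h⟩, by simp⟩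
  left_inv e := by
    apply Subtype.ext
    funext j
    by_cases h : j = i
    · subst h
      simp only [dif_pos]
      exact (Fin.ext e.2).symm
    · simp [h]
  right_inv g := by
    funext j
    simp [j.2]

end AbelianNQuandleAux

theorem abelian_nQuandle_quotient_finite {X : Type*} [Quandle X]
    (habel : IsAbelianQuandle X) (r n : ℕ) (hn : 2 ≤ n) (x : Fin r → X)
    (hgen : ∀ a : X, QuandleClosure (Set.range x) a) :
    Finite (Quotient (nQuandleSetoid X n)) ∧
      Nat.card (Quotient (nQuandleSetoid X n)) ≤ r * n ^ (r - 1) := by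
  classical
  open AbelianNQuandleAux in
  have hn1 : 1 ≤ n := le_trans (by norm_num) hn
  let D := Σ i : Fin r, {e : Fin r → Fin n // (e i : ℕ) = 0}
  let f : D → Q X n := fun p => wl x n (expand (fun j => ((p.2.1 j : ℕ)))) (qk n (x p.1))
  have hsurj : Function.Surjective f := by
    intro z
    induction z using Quotient.inductionOn' with
    | h a =>
      obtain ⟨i, l, hl⟩ := exists_word x habel n hn1 hgen a
      obtain ⟨l', hlt, hzero, heq⟩ := reduce_word x habel n hn1 l i
      refine ⟨⟨i, ⟨fun j => ⟨l'.count j, hlt j⟩, hzero⟩⟩, ?_⟩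
      show wl x n (expand (fun j => l'.count j)) (qk n (x i)) = _
      have hperm : (expand (r := r) (fun j => l'.count j)).Perm l' := by
        rw [List.perm_iff_count]
        intro j
        rw [count_expand]
      rw [wl_perm x habel n hperm, ← heq, ← hl]
      rfl
  have hfinD : Finite D := by infer_instance
  have hfin : Finite (Q X n) := Finite.of_surjective f hsurj
  refine ⟨hfin, ?_⟩
  have h1 : Nat.card (Q X n) ≤ Nat.card D := Nat.card_le_card_of_surjective f hsurj
  have h2 : Nat.card D = r * n ^ (r - 1) := by
    have hcard : ∀ i : Fin r, Nat.card {e : Fin r → Fin n // (e i : ℕ) = 0} = n ^ (r - 1) := by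
      intro i
      rw [Nat.card_congr (subEquiv n hn1 i), Nat.card_fun]
      have hne : Nat.card {j : Fin r // j ≠ i} = r - 1 := by
        rw [Nat.card_eq_fintype_card]
        have : Fintype.card {j : Fin r // ¬ j = i} = r - 1 := by
          rw [Fintype.card_subtype_compl, Fintype.card_subtype_eq, Fintype.card_fin]
        simpa [Ne] using this
      rw [hne, Nat.card_eq_fintype_card, Fintype.card_fin]
    rw [Nat.card_eq_fintype_card, Fintype.card_sigma]
    have : ∀ i : Fin r, Fintype.card {e : Fin r → Fin n // (e i : ℕ) = 0} = n ^ (r - 1) := by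
      intro i
      rw [← Nat.card_eq_fintype_card]
      exact hcard i
    simp only [this, Finset.sum_const, Finset.card_univ, Fintype.card_fin, smul_eq_mul]
  exact h2 ▸ h1
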